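/- There exists a constant C such that for all real x ≥ 2, ∑_{n ≤ 4x} d(n)² ≤ C x (log x)³, where d(n) is the number of positive divisors of n. -/

import Mathlib

open Finset

lemma divisors_eq_filter' {N n : ℕ} (hn : n ∈ Finset.Icc 1 N) :
    n.divisors = (Finset.Icc 1 N).filter (· ∣ n) := by
  simp only [Finset.mem_Icc] at hn
  ext a
  simp only [Nat.mem_divisors, Finset.mem_filter, Finset.mem_Icc]
  constructor
  · rintro ⟨ha, -⟩
    exact ⟨⟨Nat.pos_of_dvd_of_pos ha (by omega), le_trans (Nat.le_of_dvd (by omega) ha) hn.2⟩, ha⟩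
  · rintro ⟨-, ha⟩
    exact ⟨ha, by omega⟩

lemma filter_dvd_eq_image' (N g : ℕ) (hg : 1 ≤ g) :
    (Finset.Icc 1 N).filter (g ∣ ·) = (Finset.Icc 1 (N / g)).image (fun k => g * k) := by
  ext a
  simp only [Finset.mem_filter, Finset.mem_Icc, Finset.mem_image]
  constructor
  · rintro ⟨⟨h1, h2⟩, k, rfl⟩
    have hk : 0 < k := by
      rcases Nat.eq_zero_or_pos k with h | h
      · subst h; simp at h1
      · exact h
    refine ⟨k, ⟨hk, (Nat.le_div_iff_mul_le (by omega)).mpr (by rw [mul_comm]; omega)⟩, rfl⟩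
  · rintro ⟨k, ⟨hk1, hk2⟩, rfl⟩
    have h := (Nat.le_div_iff_mul_le (show 0 < g by omega)).mp hk2
    refine ⟨⟨Nat.one_le_iff_ne_zero.mpr (by positivity), by rw [mul_comm] at h; omega⟩, k, rfl⟩

lemma sum_inv_filter_dvd_le' (N g : ℕ) (hg : 1 ≤ g) :
    ∑ a ∈ (Finset.Icc 1 N).filter (g ∣ ·), (a : ℝ)⁻¹ ≤ (∑ a ∈ Finset.Icc 1 N, (a:ℝ)⁻¹) / g := by
  rw [filter_dvd_eq_image' N g hg, Finset.sum_image (by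
    intro x _ y _ h
    exact Nat.eq_of_mul_eq_mul_left (by omega) h)]
  have : ∀ k ∈ Finset.Icc 1 (N/g), ((g * k : ℕ) : ℝ)⁻¹ = (g:ℝ)⁻¹ * (k:ℝ)⁻¹ := by
    intro k hk; push_cast; rw [mul_inv]
  rw [Finset.sum_congr rfl this, ← Finset.mul_sum, div_eq_inv_mul]
  gcongr (g:ℝ)⁻¹ * ?_
  exact Finset.sum_le_sum_of_subset_of_nonneg
    (Finset.Icc_subset_Icc le_rfl (Nat.div_le_self N g))
    (fun i _ _ => by positivity)

lemma step1' (N : ℕ) :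
    ∑ n ∈ Finset.Icc 1 N, ((n.divisors.card : ℝ)) ^ 2 =
      ∑ a ∈ Finset.Icc 1 N, ∑ b ∈ Finset.Icc 1 N, ((N / Nat.lcm a b : ℕ) : ℝ) := by
  have key : ∀ n ∈ Finset.Icc 1 N, ((n.divisors.card : ℝ)) ^ 2 =
      ∑ a ∈ Finset.Icc 1 N, ∑ b ∈ Finset.Icc 1 N, (if a ∣ n ∧ b ∣ n then (1:ℝ) else 0) := by
    intro n hn
    have : ∀ a b : ℕ, (if a ∣ n ∧ b ∣ n then (1:ℝ) else 0) =
        (if a ∣ n then (1:ℝ) else 0) * (if b ∣ n then (1:ℝ) else 0) := by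
      intro a b; by_cases h1 : a ∣ n <;> by_cases h2 : b ∣ n <;> simp [h1, h2]
    simp_rw [this, ← Finset.mul_sum, ← Finset.sum_mul]
    rw [Finset.sum_boole, ← divisors_eq_filter' hn, sq]
  rw [Finset.sum_congr rfl key, Finset.sum_comm]
  refine Finset.sum_congr rfl fun a _ => ?_
  rw [Finset.sum_comm]
  refine Finset.sum_congr rfl fun b _ => ?_
  rw [Finset.sum_boole]
  congr 1
  have : (Finset.Icc 1 N).filter (fun n => a ∣ n ∧ b ∣ n) =
      (Finset.Ioc 0 N).filter (Nat.lcm a b ∣ ·) := by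
    rw [show Finset.Icc 1 N = Finset.Ioc 0 N from rfl]
    exact Finset.filter_congr fun n _ => by simp [Nat.lcm_dvd_iff]
  rw [this, Nat.Ioc_filter_dvd_card_eq_div]

lemma step2' (N : ℕ) :
    ∑ a ∈ Finset.Icc 1 N, ∑ b ∈ Finset.Icc 1 N, ((N / Nat.lcm a b : ℕ) : ℝ) ≤
      (N : ℝ) * (∑ a ∈ Finset.Icc 1 N, (a:ℝ)⁻¹) ^ 3 := by
  set H : ℝ := ∑ a ∈ Finset.Icc 1 N, (a:ℝ)⁻¹ with hH
  have hHnn : 0 ≤ H := Finset.sum_nonneg fun i _ => by positivity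
  have main : ∑ a ∈ Finset.Icc 1 N, ∑ b ∈ Finset.Icc 1 N, ((Nat.lcm a b : ℝ))⁻¹ ≤ H ^ 3 := by
    have pt : ∀ a ∈ Finset.Icc 1 N, ∀ b ∈ Finset.Icc 1 N,
        ((Nat.lcm a b : ℝ))⁻¹ ≤ ∑ g ∈ Finset.Icc 1 N,
          (if g ∣ a ∧ g ∣ b then (g:ℝ) * (a:ℝ)⁻¹ * (b:ℝ)⁻¹ else 0) := by
      intro a ha b hb
      simp only [Finset.mem_Icc] at ha hb
      have hapos : 0 < a := ha.1
      have hbpos : 0 < b := hb.1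
      have hgcd : 0 < Nat.gcd a b := Nat.gcd_pos_of_pos_left b hapos
      have hlcm : 0 < Nat.lcm a b := Nat.lcm_pos hapos hbpos
      have key : ((Nat.lcm a b : ℝ))⁻¹ = (Nat.gcd a b : ℝ) * (a:ℝ)⁻¹ * (b:ℝ)⁻¹ := by
        have h' : ((Nat.gcd a b : ℝ)) * (Nat.lcm a b : ℝ) = (a:ℝ) * b := by
          exact_mod_cast congrArg (Nat.cast : ℕ → ℝ) (Nat.gcd_mul_lcm a b)
        have h1 : (0:ℝ) < Nat.lcm a b := by exact_mod_cast hlcm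
        have h2 : (0:ℝ) < a := by exact_mod_cast hapos
        have h3 : (0:ℝ) < b := by exact_mod_cast hbpos
        field_simp
        linarith [h']
      rw [key]
      have mem : Nat.gcd a b ∈ Finset.Icc 1 N :=
        Finset.mem_Icc.mpr ⟨hgcd, le_trans (Nat.le_of_dvd hapos (Nat.gcd_dvd_left a b)) ha.2⟩
      have := Finset.single_le_sum
        (f := fun g => if g ∣ a ∧ g ∣ b then (g:ℝ) * (a:ℝ)⁻¹ * (b:ℝ)⁻¹ else 0)
        (fun i _ => by split <;> positivity) mem
      simpa [Nat.gcd_dvd_left, Nat.gcd_dvd_right] using this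
    calc ∑ a ∈ Finset.Icc 1 N, ∑ b ∈ Finset.Icc 1 N, ((Nat.lcm a b : ℝ))⁻¹
        ≤ ∑ a ∈ Finset.Icc 1 N, ∑ b ∈ Finset.Icc 1 N, ∑ g ∈ Finset.Icc 1 N,
            (if g ∣ a ∧ g ∣ b then (g:ℝ) * (a:ℝ)⁻¹ * (b:ℝ)⁻¹ else 0) :=
          Finset.sum_le_sum fun a ha => Finset.sum_le_sum fun b hb => pt a ha b hb
      _ = ∑ g ∈ Finset.Icc 1 N, ∑ a ∈ Finset.Icc 1 N, ∑ b ∈ Finset.Icc 1 N,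
            (if g ∣ a ∧ g ∣ b then (g:ℝ) * (a:ℝ)⁻¹ * (b:ℝ)⁻¹ else 0) := by
          refine Eq.trans (Finset.sum_congr rfl fun a _ => Finset.sum_comm) ?_
          exact Finset.sum_comm
      _ = ∑ g ∈ Finset.Icc 1 N, (g:ℝ) *
            (∑ a ∈ Finset.Icc 1 N, (if g ∣ a then (a:ℝ)⁻¹ else 0)) *
            (∑ b ∈ Finset.Icc 1 N, (if g ∣ b then (b:ℝ)⁻¹ else 0)) := by
          refine Finset.sum_congr rfl fun g _ => ?_
          have : ∀ a b : ℕ, (if g ∣ a ∧ g ∣ b then (g:ℝ) * (a:ℝ)⁻¹ * (b:ℝ)⁻¹ else 0) =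
              ((g:ℝ) * (if g ∣ a then (a:ℝ)⁻¹ else 0)) * (if g ∣ b then (b:ℝ)⁻¹ else 0) := by
            intro a b; by_cases h1 : g ∣ a <;> by_cases h2 : g ∣ b <;> simp [h1, h2]
          simp_rw [this, ← Finset.mul_sum, ← Finset.sum_mul, ← Finset.mul_sum]
      _ ≤ ∑ g ∈ Finset.Icc 1 N, (g:ℝ) * (H / g) * (H / g) := by
          refine Finset.sum_le_sum fun g hg => ?_
          simp only [Finset.mem_Icc] at hg
          have hgle : ∑ a ∈ Finset.Icc 1 N, (if g ∣ a then (a:ℝ)⁻¹ else 0) ≤ H / g := by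
            rw [← Finset.sum_filter]
            exact sum_inv_filter_dvd_le' N g hg.1
          have hnn : ∀ s : Finset ℕ, 0 ≤ ∑ a ∈ s, (if g ∣ a then (a:ℝ)⁻¹ else 0) :=
            fun s => Finset.sum_nonneg fun i _ => by split <;> positivity
          have hgpos : (0:ℝ) < g := by exact_mod_cast hg.1
          have hHg : 0 ≤ H / g := by positivity
          exact mul_le_mul (mul_le_mul le_rfl hgle (hnn _) (le_of_lt hgpos))
            hgle (hnn _) (by positivity)
      _ = H ^ 2 * ∑ g ∈ Finset.Icc 1 N, (g:ℝ)⁻¹ := by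
          rw [Finset.mul_sum]
          refine Finset.sum_congr rfl fun g hg => ?_
          simp only [Finset.mem_Icc] at hg
          have hgpos : (0:ℝ) < g := by exact_mod_cast hg.1
          field_simp
      _ = H ^ 3 := by rw [← hH]; ring
  calc ∑ a ∈ Finset.Icc 1 N, ∑ b ∈ Finset.Icc 1 N, ((N / Nat.lcm a b : ℕ) : ℝ)
      ≤ ∑ a ∈ Finset.Icc 1 N, ∑ b ∈ Finset.Icc 1 N, (N:ℝ) * ((Nat.lcm a b : ℝ))⁻¹ := by
        refine Finset.sum_le_sum fun a _ => Finset.sum_le_sum fun b _ => ?_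
        rw [← div_eq_mul_inv]
        exact Nat.cast_div_le
    _ = (N:ℝ) * ∑ a ∈ Finset.Icc 1 N, ∑ b ∈ Finset.Icc 1 N, ((Nat.lcm a b : ℝ))⁻¹ := by
        simp_rw [← Finset.mul_sum]
    _ ≤ (N:ℝ) * H ^ 3 := by
        have : (0:ℝ) ≤ N := Nat.cast_nonneg N
        exact mul_le_mul_of_nonneg_left main this

theorem divisor_squared_sum_bound :
    ∃ C : ℝ, 0 < C ∧ ∀ x : ℝ, 2 ≤ x →
      ∑ n ∈ Finset.Icc 1 ⌊4 * x⌋₊, ((n.divisors.card : ℝ)) ^ 2 ≤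
        C * x * Real.log x ^ 3 := by
  refine ⟨500, by norm_num, fun x hx => ?_⟩
  set N := ⌊4 * x⌋₊ with hN
  have hx0 : (0:ℝ) < x := by linarith
  have h4x : (0:ℝ) ≤ 4 * x := by linarith
  have hNle : (N:ℝ) ≤ 4 * x := Nat.floor_le h4x
  have hN8 : 8 ≤ N := Nat.le_floor (by push_cast; linarith)
  have hNpos : (0:ℝ) < N := by exact_mod_cast (by omega : 0 < N)
  have hlogx : Real.log 2 ≤ Real.log x := Real.log_le_log (by norm_num) hx
  have hlog2 : (0.6931471803 : ℝ) < Real.log 2 := Real.log_two_gt_d9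
  have hlogxpos : (0:ℝ) < Real.log x := by linarith
  -- H bound
  have hHeq : (harmonic N : ℝ) = ∑ a ∈ Finset.Icc 1 N, (a:ℝ)⁻¹ := by
    rw [harmonic_eq_sum_Icc]; push_cast; rfl
  have hH1 : ∑ a ∈ Finset.Icc 1 N, (a:ℝ)⁻¹ ≤ 1 + Real.log N := by
    rw [← hHeq]; exact harmonic_le_one_add_log N
  have hlogN : Real.log N ≤ 3 * Real.log x := by
    have h1 : Real.log N ≤ Real.log (4 * x) := Real.log_le_log hNpos hNle
    have h2 : (4:ℝ) * x ≤ x ^ 3 := by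
      nlinarith [mul_nonneg (mul_nonneg (sub_nonneg.mpr hx) (by linarith : (0:ℝ) ≤ x + 2))
        (by linarith : (0:ℝ) ≤ x)]
    have h3 : Real.log (4 * x) ≤ Real.log (x ^ 3) := Real.log_le_log (by linarith) h2
    rw [Real.log_pow] at h3
    push_cast at h3
    linarith
  have hHle : ∑ a ∈ Finset.Icc 1 N, (a:ℝ)⁻¹ ≤ 5 * Real.log x := by
    have h1 : (1:ℝ) ≤ 2 * Real.log x := by linarith
    linarith
  have hHnn : 0 ≤ ∑ a ∈ Finset.Icc 1 N, (a:ℝ)⁻¹ :=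
    Finset.sum_nonneg fun i _ => by positivity
  calc ∑ n ∈ Finset.Icc 1 N, ((n.divisors.card : ℝ)) ^ 2
      ≤ (N:ℝ) * (∑ a ∈ Finset.Icc 1 N, (a:ℝ)⁻¹) ^ 3 := by
        rw [step1' N]; exact step2' N
    _ ≤ (4 * x) * (5 * Real.log x) ^ 3 := by
        apply mul_le_mul hNle (pow_le_pow_left₀ hHnn hHle 3) (by positivity) (by linarith)
    _ = 500 * x * Real.log x ^ 3 := by ring
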